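/- For every ρ : V → ℝ with ρ_i > 0 for all i ∈ V and every direction σ : V → ℝ, the function ε ↦ I(ρ + εσ) is twice differentiable at ε = 0 and its second derivative there equals Σ_{{i,j}∈E} t_{ij} (σ_i/ρ_i − σ_j/ρ_j)², where t_{ij} = (ρ_i − ρ_j)(log ρ_i − log ρ_j) + (ρ_i + ρ_j) > 0. -/

import Mathlib

/-- The discrete Fisher information on a graph:
`I(ρ) = Σ_{{i,j} ∈ E} (log ρ_i − log ρ_j)² (ρ_i + ρ_j)/2`,
where the sum runs over the edges of the graph, each unordered edge counted once. -/
noncomputable def discreteFisher {V : Type*} [Fintype V] [DecidableEq V]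
    (G : SimpleGraph V) [DecidableRel G.Adj] (ρ : V → ℝ) : ℝ :=
  ∑ e ∈ G.edgeFinset,
    Sym2.lift ⟨fun i j => (Real.log (ρ i) - Real.log (ρ j)) ^ 2 * (ρ i + ρ j) / 2,
      fun i j => by ring⟩ e

/-- The coefficient `t_{ij} = (ρ_i − ρ_j)(log ρ_i − log ρ_j) + (ρ_i + ρ_j)`, as a symmetric
function on unordered pairs. -/
noncomputable def fisherHessCoeff {V : Type*} (ρ : V → ℝ) : Sym2 V → ℝ :=
  Sym2.lift ⟨fun i j => (ρ i - ρ j) * (Real.log (ρ i) - Real.log (ρ j)) + (ρ i + ρ j),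
    fun i j => by ring⟩

/-- For `ρ > 0` and any direction `σ`, the function `ε ↦ I(ρ + εσ)` is twice differentiable
at `ε = 0`, with second derivative `Σ_{{i,j}∈E} t_{ij} (σ_i/ρ_i − σ_j/ρ_j)²`, where
`t_{ij} = (ρ_i − ρ_j)(log ρ_i − log ρ_j) + (ρ_i + ρ_j) > 0`. -/

private lemma affine_hasDerivAt (p s ε : ℝ) : HasDerivAt (fun t : ℝ => p + t * s) s ε := by
  simpa using ((hasDerivAt_id ε).mul_const s).const_add p

private lemma log_affine_hasDerivAt (p s ε : ℝ) (hA : 0 < p + ε * s) :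
    HasDerivAt (fun t : ℝ => Real.log (p + t * s)) (s / (p + ε * s)) ε := by
  simpa [div_eq_inv_mul, Function.comp_def] using
    (Real.hasDerivAt_log (ne_of_gt hA)).comp ε (affine_hasDerivAt p s ε)

private lemma L1 (p s q r ε : ℝ) (hA : 0 < p + ε * s) (hB : 0 < q + ε * r) :
    HasDerivAt
      (fun t : ℝ => (Real.log (p + t * s) - Real.log (q + t * r)) ^ 2
        * ((p + t * s) + (q + t * r)) / 2)
      ((Real.log (p + ε * s) - Real.log (q + ε * r))
          * (s / (p + ε * s) - r / (q + ε * r)) * ((p + ε * s) + (q + ε * r))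
        + (Real.log (p + ε * s) - Real.log (q + ε * r)) ^ 2 * (s + r) / 2) ε := by
  have hL := (log_affine_hasDerivAt p s ε hA).fun_sub (log_affine_hasDerivAt q r ε hB)
  have hS := (affine_hasDerivAt p s ε).fun_add (affine_hasDerivAt q r ε)
  have := ((hL.fun_pow 2).fun_mul hS).div_const 2
  refine this.congr_deriv ?_
  ring

private lemma inv_affine_hasDerivAt (p s : ℝ) (hp : 0 < p) :
    HasDerivAt (fun t : ℝ => s / (p + t * s)) (-(s * s) / (p ^ 2)) 0 := by
  have h0 : p + 0 * s ≠ 0 := by simpa using hp.ne'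
  have := (hasDerivAt_const (0:ℝ) s).fun_div (affine_hasDerivAt p s 0) h0
  refine this.congr_deriv ?_
  simp

private lemma L2 (p s q r : ℝ) (hp : 0 < p) (hq : 0 < q) :
    HasDerivAt
      (fun t : ℝ => (Real.log (p + t * s) - Real.log (q + t * r))
          * (s / (p + t * s) - r / (q + t * r)) * ((p + t * s) + (q + t * r))
        + (Real.log (p + t * s) - Real.log (q + t * r)) ^ 2 * (s + r) / 2)
      (((p - q) * (Real.log p - Real.log q) + (p + q)) * (s / p - r / q) ^ 2) 0 := by
  have hA : (0:ℝ) < p + 0 * s := by simpa using hp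
  have hB : (0:ℝ) < q + 0 * r := by simpa using hq
  have hL := (log_affine_hasDerivAt p s 0 hA).fun_sub (log_affine_hasDerivAt q r 0 hB)
  have hL' := (inv_affine_hasDerivAt p s hp).fun_sub (inv_affine_hasDerivAt q r hq)
  have hS := (affine_hasDerivAt p s 0).fun_add (affine_hasDerivAt q r 0)
  have h1 := (hL.fun_mul hL').fun_mul hS
  have h2 := (hL.fun_pow 2).mul_const ((s + r) / 2)
  have h := h1.fun_add h2
  have heq : ∀ t : ℝ,
      ((Real.log (p + t * s) - Real.log (q + t * r)) * (s / (p + t * s) - r / (q + t * r)))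
          * ((p + t * s) + (q + t * r))
        + (Real.log (p + t * s) - Real.log (q + t * r)) ^ 2 * ((s + r) / 2)
      = (Real.log (p + t * s) - Real.log (q + t * r))
          * (s / (p + t * s) - r / (q + t * r)) * ((p + t * s) + (q + t * r))
        + (Real.log (p + t * s) - Real.log (q + t * r)) ^ 2 * (s + r) / 2 := by
    intro t; ring
  rw [show (fun t : ℝ => ((Real.log (p + t * s) - Real.log (q + t * r)) * (s / (p + t * s) - r / (q + t * r)))
          * ((p + t * s) + (q + t * r))
        + (Real.log (p + t * s) - Real.log (q + t * r)) ^ 2 * ((s + r) / 2)) =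
      (fun t : ℝ => (Real.log (p + t * s) - Real.log (q + t * r))
          * (s / (p + t * s) - r / (q + t * r)) * ((p + t * s) + (q + t * r))
        + (Real.log (p + t * s) - Real.log (q + t * r)) ^ 2 * (s + r) / 2) from funext heq] at h
  refine h.congr_deriv ?_
  simp only [zero_mul, add_zero, pow_one]
  field_simp
  ring

private lemma tpos (a b : ℝ) (ha : 0 < a) (hb : 0 < b) :
    0 < (a - b) * (Real.log a - Real.log b) + (a + b) := by
  have h : 0 ≤ (a - b) * (Real.log a - Real.log b) := by
    rcases le_total a b with hab | hab
    · nlinarith [Real.log_le_log ha hab]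
    · nlinarith [Real.log_le_log hb hab]
  linarith [add_pos ha hb]


theorem fisher_second_derivative {V : Type*} [Fintype V] [DecidableEq V]
    (G : SimpleGraph V) [DecidableRel G.Adj]
    (ρ σ : V → ℝ) (hρ : ∀ i, 0 < ρ i) :
    (∀ᶠ ε in nhds (0 : ℝ),
        DifferentiableAt ℝ (fun ε : ℝ => discreteFisher G (fun i => ρ i + ε * σ i)) ε) ∧
    DifferentiableAt ℝ (deriv (fun ε : ℝ => discreteFisher G (fun i => ρ i + ε * σ i))) 0 ∧
    deriv (deriv (fun ε : ℝ => discreteFisher G (fun i => ρ i + ε * σ i))) 0 =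
      ∑ e ∈ G.edgeFinset,
        fisherHessCoeff ρ e *
          Sym2.lift ⟨fun i j => (σ i / ρ i - σ j / ρ j) ^ 2, fun i j => by ring⟩ e ∧
    ∀ e ∈ G.edgeFinset, 0 < fisherHessCoeff ρ e := by
  -- the first-derivative integrand, as a symmetric function
  set D1 : Sym2 V → ℝ → ℝ := Sym2.lift
    ⟨fun i j => fun ε =>
      (Real.log (ρ i + ε * σ i) - Real.log (ρ j + ε * σ j))
          * (σ i / (ρ i + ε * σ i) - σ j / (ρ j + ε * σ j))
          * ((ρ i + ε * σ i) + (ρ j + ε * σ j))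
        + (Real.log (ρ i + ε * σ i) - Real.log (ρ j + ε * σ j)) ^ 2 * (σ i + σ j) / 2,
      fun i j => by funext ε; ring⟩ with hD1
  set F : ℝ → ℝ := fun ε => discreteFisher G (fun i => ρ i + ε * σ i) with hF
  set F1 : ℝ → ℝ := fun ε => ∑ e ∈ G.edgeFinset, D1 e ε with hF1def
  -- positivity eventually
  have hEvPos : ∀ᶠ ε in nhds (0 : ℝ), ∀ i, 0 < ρ i + ε * σ i := by
    rw [Filter.eventually_all]
    intro i
    have hc : Filter.Tendsto (fun ε : ℝ => ρ i + ε * σ i) (nhds 0) (nhds (ρ i)) := by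
      have : Continuous (fun ε : ℝ => ρ i + ε * σ i) := by continuity
      simpa using this.tendsto 0
    exact hc.eventually (eventually_gt_nhds (hρ i))
  -- F has derivative F1 wherever positivity holds
  have hKey : ∀ ε : ℝ, (∀ i, 0 < ρ i + ε * σ i) → HasDerivAt F (F1 ε) ε := by
    intro ε hpos
    simp only [hF, hF1def, discreteFisher]
    apply HasDerivAt.fun_sum
    intro e he
    induction e with
    | _ i j =>
      simp only [hD1, Sym2.lift_mk]
      exact L1 (ρ i) (σ i) (ρ j) (σ j) ε (hpos i) (hpos j)
  have hEvDeriv : ∀ᶠ ε in nhds (0 : ℝ), HasDerivAt F (F1 ε) ε :=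
    hEvPos.mono fun ε h => hKey ε h
  have hderivEq : deriv F =ᶠ[nhds (0 : ℝ)] F1 := hEvDeriv.mono fun ε h => h.deriv
  -- second derivative
  have hF1 : HasDerivAt F1
      (∑ e ∈ G.edgeFinset, fisherHessCoeff ρ e *
        Sym2.lift ⟨fun i j => (σ i / ρ i - σ j / ρ j) ^ 2, fun i j => by ring⟩ e) 0 := by
    apply HasDerivAt.fun_sum
    intro e he
    induction e with
    | _ i j =>
      simp only [hD1, Sym2.lift_mk, fisherHessCoeff]
      exact L2 (ρ i) (σ i) (ρ j) (σ j) (hρ i) (hρ j)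
  refine ⟨hEvDeriv.mono fun ε h => h.differentiableAt, ?_, ?_, ?_⟩
  · exact (hderivEq.differentiableAt_iff).mpr hF1.differentiableAt
  · rw [hderivEq.deriv_eq]
    exact hF1.deriv
  · intro e he
    induction e with
    | _ i j =>
      simp only [fisherHessCoeff, Sym2.lift_mk]
      exact tpos (ρ i) (ρ j) (hρ i) (hρ j)
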